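/- Let S be a vertex ordering of a graph, v a vertex, and S' obtained from S by moving v to an earlier position (p_{S'}(v) < p_S(v)) while keeping the relative order of all other vertices. If v receives the same color in the first-fit colorings along S and S', then every vertex receives the same color in the first-fit colorings along S and S'. -/

import Mathlib

open SimpleGraph

/-- First-fit coloring along a vertex sequence: each vertex in turn receives the
smallest positive integer not used on its already-colored neighbors. Uncolored
vertices have color `0`. -/
noncomputable def firstFit {V : Type*} [DecidableEq V] (G : SimpleGraph V) (l : List V) :
    V → ℕ :=
  l.foldl (fun c v => Function.update c v
    (sInf {k | 0 < k ∧ ∀ u, G.Adj v u → c u ≠ k})) (fun _ => 0)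

/-- `l` is an ordering of all vertices. -/
def IsOrdering {V : Type*} (l : List V) : Prop := l.Nodup ∧ ∀ v : V, v ∈ l

/-- `l` is a connected ordering: every vertex after the first has a neighbor earlier. -/
def IsConnectedOrdering {V : Type*} (G : SimpleGraph V) (l : List V) : Prop :=
  IsOrdering l ∧ ∀ i (hi : i < l.length), 0 < i → ∃ u ∈ l.take i, G.Adj u (l.get ⟨i, hi⟩)

/-- Number of colors used by first-fit along `l`. -/
noncomputable def numColors {V : Type*} [Fintype V] [DecidableEq V] (G : SimpleGraph V)
    (l : List V) : ℕ :=
  Finset.univ.sup (firstFit G l)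

/-- The Grundy number: maximum number of first-fit colors over all vertex orderings. -/
noncomputable def grundy {V : Type*} [Fintype V] [DecidableEq V] (G : SimpleGraph V) : ℕ :=
  sSup {k | ∃ l : List V, IsOrdering l ∧ k = numColors G l}

/-- The connected Grundy number: maximum number of first-fit colors over connected orderings. -/
noncomputable def connGrundy {V : Type*} [Fintype V] [DecidableEq V] (G : SimpleGraph V) : ℕ :=
  sSup {k | ∃ l : List V, IsConnectedOrdering G l ∧ k = numColors G l}

section Aux
variable {V : Type*} [DecidableEq V] (G : SimpleGraph V)

/-- One step of first-fit. -/
noncomputable def ffStep : (V → ℕ) → V → (V → ℕ) := fun c v => Function.update c v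
    (sInf {k | 0 < k ∧ ∀ u, G.Adj v u → c u ≠ k})

lemma ffFoldl_of_not_mem (c : V → ℕ) {l : List V} {u : V} (hu : u ∉ l) :
    l.foldl (ffStep G) c u = c u := by
  induction l generalizing c with
  | nil => rfl
  | cons w t ih =>
      simp only [List.mem_cons, not_or] at hu
      rw [List.foldl_cons, ih _ hu.2, ffStep, Function.update_of_ne hu.1]

/-- Key lemma: pre-coloring `v` with `k` doesn't change first-fit colors of `l`,
provided no neighbor of `v` in `l` ends up with color `k`. -/
lemma ffFoldl_update (c : V → ℕ) (v : V) (k : ℕ) (hk : 0 < k) (hcv : c v = 0)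
    {l : List V} (hv : v ∉ l) (hnd : l.Nodup)
    (hne : ∀ w ∈ l, G.Adj v w → l.foldl (ffStep G) c w ≠ k) :
    l.foldl (ffStep G) (Function.update c v k) = Function.update (l.foldl (ffStep G) c) v k := by
  induction l generalizing c with
  | nil => rfl
  | cons w t ih =>
      simp only [List.mem_cons, not_or] at hv
      have hwv : w ≠ v := fun h => hv.1 h.symm
      have hnd' : t.Nodup := hnd.of_cons
      have hwt : w ∉ t := (List.nodup_cons.mp hnd).1
      -- the step at w gives the same color
      have hstep : ffStep G (Function.update c v k) w = Function.update (ffStep G c w) v k := by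
        set A : Set ℕ := {m | 0 < m ∧ ∀ u, G.Adj w u → c u ≠ m} with hA
        set B : Set ℕ := {m | 0 < m ∧ ∀ u, G.Adj w u → Function.update c v k u ≠ m} with hB
        have hBA : sInf B = sInf A := by
          by_cases hadj : G.Adj w v
          · -- w is a neighbor of v
            have hm0 : sInf A ≠ k := by
              have := hne w List.mem_cons_self hadj.symm
              rwa [List.foldl_cons, ffFoldl_of_not_mem G _ hwt, ffStep,
                Function.update_self] at this
            have hsub : B ⊆ A := by
              intro m hm
              refine ⟨hm.1, fun u hu => ?_⟩
              by_cases huv : u = v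
              · subst huv; rw [hcv]; exact hm.1.ne
              · have := hm.2 u hu
                rwa [Function.update_of_ne huv] at this
            rcases Set.eq_empty_or_nonempty A with hAe | hAne
            · rw [hAe] at hsub
              rw [Set.subset_empty_iff.mp hsub, hAe]
            · have hmem : sInf A ∈ A := Nat.sInf_mem hAne
              have hmemB : sInf A ∈ B := by
                refine ⟨hmem.1, fun u hu => ?_⟩
                by_cases huv : u = v
                · subst huv; rw [Function.update_self]; exact fun h => hm0 h.symm
                · rw [Function.update_of_ne huv]; exact hmem.2 u hu
              have hBne : B.Nonempty := ⟨sInf A, hmemB⟩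
              exact le_antisymm (Nat.sInf_le hmemB) (Nat.sInf_le (hsub (Nat.sInf_mem hBne)))
          · -- not a neighbor: the sets coincide
            congr 1
            ext m
            constructor <;> intro hm <;> refine ⟨hm.1, fun u hu => ?_⟩
            · have := hm.2 u hu
              have huv : u ≠ v := fun h => hadj (h ▸ hu)
              rwa [Function.update_of_ne huv] at this
            · have huv : u ≠ v := fun h => hadj (h ▸ hu)
              rw [Function.update_of_ne huv]; exact hm.2 u hu
        rw [ffStep, ffStep, hBA, Function.update_comm hwv]
      rw [List.foldl_cons, List.foldl_cons, hstep]
      refine ih _ ?_ hv.2 hnd' ?_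
      · rw [ffStep, Function.update_of_ne (Ne.symm hwv), hcv]
      · intro w' hw' hadj
        have := hne w' (List.mem_cons_of_mem w hw') hadj
        rwa [List.foldl_cons] at this

lemma le_foldr_max {a : ℕ} : ∀ {l : List ℕ}, a ∈ l → a ≤ l.foldr max 0
  | b :: t, h => by
      rcases List.mem_cons.mp h with rfl | h
      · exact le_max_left _ _
      · exact le_trans (le_foldr_max h) (le_max_right _ _)

lemma ffFoldl_bounded (l : List V) :
    ∃ N, 0 < N ∧ ∀ u, l.foldl (ffStep G) (fun _ => 0) u < N := by
  classical
  set c := l.foldl (ffStep G) (fun _ => 0) with hc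
  refine ⟨(l.map c).foldr max 0 + 1, Nat.succ_pos _, fun u => ?_⟩
  by_cases hu : u ∈ l
  · have : c u ∈ l.map c := List.mem_map_of_mem hu
    have := le_foldr_max this
    omega
  · rw [hc, ffFoldl_of_not_mem G _ hu]
    omega

lemma insertIdx_append_aux (v : V) : ∀ (p : ℕ) (P Q : List V), p ≤ P.length →
    (P ++ Q).insertIdx p v = P.take p ++ v :: (P.drop p ++ Q) := by
  intro p
  induction p with
  | zero => intro P Q _; simp [List.insertIdx_zero]
  | succ n ih =>
      intro P Q hp
      cases P with
      | nil => simp at hp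
      | cons a P =>
          simp only [List.length_cons, Nat.succ_le_succ_iff] at hp
          simp [List.insertIdx_succ_cons, ih P Q hp]

end Aux

lemma firstFit_eq_foldl {V : Type*} [DecidableEq V] (G : SimpleGraph V) (l : List V) :
    firstFit G l = l.foldl (ffStep G) (fun _ => 0) := rfl

theorem stmt7 {V : Type*} [DecidableEq V] (G : SimpleGraph V) (S : List V)
    (hS : IsOrdering S) (v : V) (p' : ℕ)
    (S' : List V) (hS' : S' = (S.erase v).insertIdx p' v)
    (hmove : p' < S.idxOf v)
    (hcol : firstFit G S v = firstFit G S' v) :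
    firstFit G S = firstFit G S' := by
  obtain ⟨hnd, hmem⟩ := hS
  obtain ⟨P, Q, rfl⟩ := List.append_of_mem (hmem v)
  rw [List.nodup_append] at hnd
  obtain ⟨hndP, hndvQ, hdisj⟩ := hnd
  have hvP : v ∉ P := fun h => hdisj v h v List.mem_cons_self rfl
  have hvQ : v ∉ Q := (List.nodup_cons.mp hndvQ).1
  have hidx : (P ++ v :: Q).idxOf v = P.length := by
    rw [List.idxOf_append_of_notMem hvP, List.idxOf_cons_self]; omega
  rw [hidx] at hmove
  have herase : (P ++ v :: Q).erase v = P ++ Q := by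
    rw [List.erase_append_right _ hvP, List.erase_cons_head]
  subst hS'
  rw [herase, insertIdx_append_aux v p' P Q hmove.le] at hcol ⊢
  set P₁ := P.take p' with hP₁
  set P₂ := P.drop p' with hP₂
  have hPsplit : P₁ ++ P₂ = P := List.take_append_drop p' P
  have hvP₁ : v ∉ P₁ := fun h => hvP (hPsplit ▸ List.mem_append_left _ h)
  have hvP₂ : v ∉ P₂ := fun h => hvP (hPsplit ▸ List.mem_append_right _ h)
  have hndP₂ : P₂.Nodup := hndP.sublist (List.drop_sublist p' P)
  set c₁ : V → ℕ := P₁.foldl (ffStep G) (fun _ => 0) with hc₁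
  set cP : V → ℕ := P₂.foldl (ffStep G) c₁ with hcP
  have hcPP : P.foldl (ffStep G) (fun _ => 0) = cP := by
    rw [← hPsplit, List.foldl_append]
  set k : ℕ := sInf {m | 0 < m ∧ ∀ u, G.Adj v u → cP u ≠ m} with hk
  set k' : ℕ := sInf {m | 0 < m ∧ ∀ u, G.Adj v u → c₁ u ≠ m} with hk'
  have hffS : firstFit G (P ++ v :: Q) = Q.foldl (ffStep G) (Function.update cP v k) := by
    rw [firstFit_eq_foldl, List.foldl_append, hcPP, List.foldl_cons]
    rfl
  have hffS' : firstFit G (P₁ ++ v :: (P₂ ++ Q))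
      = (P₂ ++ Q).foldl (ffStep G) (Function.update c₁ v k') := by
    rw [firstFit_eq_foldl, List.foldl_append, ← hc₁, List.foldl_cons]
    rfl
  have hSv : firstFit G (P ++ v :: Q) v = k := by
    rw [hffS, ffFoldl_of_not_mem G _ hvQ, Function.update_self]
  have hS'v : firstFit G (P₁ ++ v :: (P₂ ++ Q)) v = k' := by
    have : v ∉ P₂ ++ Q := by
      simp only [List.mem_append]; tauto
    rw [hffS', ffFoldl_of_not_mem G _ this, Function.update_self]
  have hkk' : k = k' := by rw [← hSv, ← hS'v, hcol]
  -- k is a valid color: the defining set is nonempty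
  obtain ⟨N, hN0, hNb⟩ := ffFoldl_bounded G P
  rw [hcPP] at hNb
  have hkmem : 0 < k ∧ ∀ u, G.Adj v u → cP u ≠ k := by
    have : k ∈ {m | 0 < m ∧ ∀ u, G.Adj v u → cP u ≠ m} :=
      Nat.sInf_mem ⟨N, hN0, fun u _ => (hNb u).ne⟩
    exact this
  have hc₁v : c₁ v = 0 := ffFoldl_of_not_mem G _ hvP₁
  have hmain : P₂.foldl (ffStep G) (Function.update c₁ v k) = Function.update cP v k := by
    rw [ffFoldl_update G c₁ v k hkmem.1 hc₁v hvP₂ hndP₂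
      (fun w hw hadj => hkmem.2 w hadj)]
  rw [hffS, hffS', ← hkk', List.foldl_append, hmain]
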